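/- Let $\Psi$ be an Orlicz function with $\Psi(u)>1$ and let $X_1,\ldots,X_N$ be i.i.d. real random variables with $\mathbb{P}(X_j=u)=\mathbb{P}(X_j=-u)=\frac{1}{2N\Psi(u)}$ and $\mathbb{P}(X_j=0)=1-\frac{1}{N\Psi(u)}$. Then $\|\max_{j\le N}|X_j|\|_\Psi\le 1$ and $\mathbb{E}|\sum_{j=1}^N X_j|\le u/\Psi(u)$. -/

import Mathlib

open MeasureTheory ProbabilityTheory

/-- An Orlicz function: convex, strictly increasing on `[0,∞)`, vanishing at `0`. -/
def IsOrlicz (Ψ : ℝ → ℝ) : Prop :=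
  ConvexOn ℝ (Set.Ici 0) Ψ ∧ StrictMonoOn Ψ (Set.Ici 0) ∧ Ψ 0 = 0

/-- The associated exponent `ψ` with `Ψ = e^ψ - 1`. -/
noncomputable def orliczExp (Ψ : ℝ → ℝ) (x : ℝ) : ℝ := Real.log (1 + Ψ x)

/-- The Orlicz (Luxemburg) norm of a Banach-space-valued random variable. -/
noncomputable def orliczNorm {Ω : Type*} [MeasurableSpace Ω] (μ : Measure Ω)
    (Ψ : ℝ → ℝ) {F : Type*} [NormedAddCommGroup F] (X : Ω → F) : ℝ :=
  sInf {a : ℝ | 0 < a ∧ ∫⁻ ω, ENNReal.ofReal (Ψ (‖X ω‖ / a)) ∂μ ≤ 1}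

/-- `X` has finite Orlicz norm. -/
def OrliczFinite {Ω : Type*} [MeasurableSpace Ω] (μ : Measure Ω)
    (Ψ : ℝ → ℝ) {F : Type*} [NormedAddCommGroup F] (X : Ω → F) : Prop :=
  ∃ a : ℝ, 0 < a ∧ ∫⁻ ω, ENNReal.ofReal (Ψ (‖X ω‖ / a)) ∂μ ≤ 1

/-- Condition (HJ): `ψ(su) ≤ K (s ln(1+s) + s ψ(u))` for all `s, u ≥ K`. -/
def HJCond (Ψ : ℝ → ℝ) : Prop :=
  ∃ K > (0:ℝ), ∀ s u : ℝ, K ≤ s → K ≤ u →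
    orliczExp Ψ (s * u) ≤ K * (s * Real.log (1 + s) + s * orliczExp Ψ u)

/-- A Rademacher (symmetric ±1) random variable. -/
def IsRademacher {Ω : Type*} [MeasurableSpace Ω] (μ : Measure Ω) (ε : Ω → ℝ) : Prop :=
  μ {ω | ε ω = 1} = 1/2 ∧ μ {ω | ε ω = -1} = 1/2

/-- Testing variables: three-point i.i.d. variables have `‖max|X_j|‖_Ψ ≤ 1` and
`𝔼|∑ X_j| ≤ u/Ψ(u)`. -/
theorem stmt13 {Ω : Type*} [MeasurableSpace Ω] {μ : Measure Ω} [IsProbabilityMeasure μ]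
    {Ψ : ℝ → ℝ} (hΨ : IsOrlicz Ψ) {u : ℝ} (hu : 0 < u) (hΨu : 1 < Ψ u)
    {N : ℕ} (hN : 0 < N) (X : Fin N → Ω → ℝ)
    (hmeas : ∀ j, Measurable (X j))
    (hindep : iIndepFun X μ)
    (hup : ∀ j, μ {ω | X j ω = u} = ENNReal.ofReal (1 / (2 * N * Ψ u)))
    (hdown : ∀ j, μ {ω | X j ω = -u} = ENNReal.ofReal (1 / (2 * N * Ψ u)))
    (hzero : ∀ j, μ {ω | X j ω = 0} = ENNReal.ofReal (1 - 1 / (N * Ψ u))) :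
    orliczNorm μ Ψ (fun ω => ⨆ j, |X j ω|) ≤ 1 ∧
      ∫⁻ ω, ‖∑ j, X j ω‖₊ ∂μ ≤ ENNReal.ofReal (u / Ψ u) := by

  classical
  have hΨ0 : Ψ 0 = 0 := hΨ.2.2
  have hmono : MonotoneOn Ψ (Set.Ici 0) := hΨ.2.1.monotoneOn
  have hΨu0 : (0:ℝ) < Ψ u := lt_trans one_pos hΨu
  have hΨne : Ψ u ≠ 0 := ne_of_gt hΨu0
  have hN1 : (1:ℝ) ≤ (N:ℝ) := by exact_mod_cast hN
  have hNne : (N:ℝ) ≠ 0 := by positivity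
  have hc1 : (1:ℝ) < (N:ℝ) * Ψ u := by nlinarith
  have hc0 : (0:ℝ) < (N:ℝ) * Ψ u := lt_trans one_pos hc1
  have hp : (0:ℝ) ≤ 1 / (2 * (N:ℝ) * Ψ u) := by positivity
  have hq : (0:ℝ) ≤ 1 - 1 / ((N:ℝ) * Ψ u) := by
    rw [sub_nonneg, div_le_one hc0]; exact hc1.le
  set A : Fin N → Set Ω := fun j => {ω | X j ω = u} with hA
  set B : Fin N → Set Ω := fun j => {ω | X j ω = -u} with hB
  set C : Fin N → Set Ω := fun j => {ω | X j ω = 0} with hC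
  have hAm : ∀ j, MeasurableSet (A j) := fun j => (hmeas j) (measurableSet_singleton u)
  have hBm : ∀ j, MeasurableSet (B j) := fun j => (hmeas j) (measurableSet_singleton (-u))
  have hCm : ∀ j, MeasurableSet (C j) := fun j => (hmeas j) (measurableSet_singleton 0)
  have hABd : ∀ j, Disjoint (A j) (B j) := by
    intro j
    rw [Set.disjoint_left]
    intro ω h1 h2
    simp only [hA, hB, Set.mem_setOf_eq] at h1 h2
    rw [h1] at h2; linarith
  have hABCd : ∀ j, Disjoint (A j ∪ B j) (C j) := by
    intro j
    rw [Set.disjoint_left]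
    intro ω h1 h2
    simp only [hA, hB, hC, Set.mem_union, Set.mem_setOf_eq] at h1 h2
    rcases h1 with h1 | h1 <;> rw [h1] at h2 <;> [exact hu.ne' h2; exact hu.ne' (neg_eq_zero.mp h2)]
  have hSone : ∀ j, μ (A j ∪ B j ∪ C j) = 1 := by
    intro j
    rw [measure_union (hABCd j) (hCm j), measure_union (hABd j) (hBm j),
      hup j, hdown j, hzero j, ← ENNReal.ofReal_add hp hp, ← ENNReal.ofReal_add (by positivity) hq,
      show (1 / (2 * (N:ℝ) * Ψ u) + 1 / (2 * (N:ℝ) * Ψ u) + (1 - 1 / ((N:ℝ) * Ψ u))) = 1 by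
        field_simp; ring, ENNReal.ofReal_one]
  have hE : ∀ᵐ ω ∂μ, ∀ j, X j ω = u ∨ X j ω = -u ∨ X j ω = 0 := by
    rw [ae_all_iff]
    intro j
    have hnull : μ (A j ∪ B j ∪ C j)ᶜ = 0 := by
      rw [measure_compl (((hAm j).union (hBm j)).union (hCm j)) (measure_ne_top μ _),
        hSone j, measure_univ, tsub_self]
    refine measure_mono_null ?_ hnull
    intro ω hω
    simp only [Set.mem_compl_iff, hA, hB, hC, Set.mem_union, Set.mem_setOf_eq] at hω ⊢
    tauto
  have hCcompl : ∀ j, ({ω | X j ω ≠ 0} : Set Ω) = (C j)ᶜ := fun j => rfl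
  have hne : ∀ j, μ {ω | X j ω ≠ 0} = ENNReal.ofReal (1 / ((N:ℝ) * Ψ u)) := by
    intro j
    rw [hCcompl j, measure_compl (hCm j) (measure_ne_top μ _), measure_univ, hzero j,
      ← ENNReal.ofReal_one, ← ENNReal.ofReal_sub _ hq]
    congr 1
    ring
  haveI : Nonempty (Fin N) := ⟨⟨0, hN⟩⟩
  constructor
  · refine csInf_le ⟨0, fun a ha => ha.1.le⟩ ⟨one_pos, ?_⟩
    set S : Set Ω := ⋃ j, {ω | X j ω ≠ 0} with hSdef
    have hSm : MeasurableSet S := MeasurableSet.iUnion (fun j => by rw [hCcompl j]; exact (hCm j).compl)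
    have hbound : ∀ᵐ ω ∂μ, ENNReal.ofReal (Ψ (‖⨆ j, |X j ω|‖ / 1)) ≤
        S.indicator (fun _ => ENNReal.ofReal (Ψ u)) ω := by
      filter_upwards [hE] with ω hω
      have habs : ∀ j, |X j ω| ≤ u := by
        intro j
        rcases hω j with h | h | h <;> rw [h]
        · rw [abs_of_pos hu]
        · rw [abs_neg, abs_of_pos hu]
        · rw [abs_zero]; exact hu.le
      have h0 : 0 ≤ ⨆ j, |X j ω| := Real.iSup_nonneg (fun j => abs_nonneg _)
      have hle : (⨆ j, |X j ω|) ≤ u := ciSup_le habs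
      rw [Real.norm_of_nonneg h0, div_one]
      by_cases hS' : ω ∈ S
      · rw [Set.indicator_of_mem hS']
        exact ENNReal.ofReal_le_ofReal (hmono h0 hu.le hle)
      · rw [Set.indicator_of_notMem hS']
        have hz : ∀ j, X j ω = 0 := by
          intro j
          by_contra h
          exact hS' (Set.mem_iUnion.2 ⟨j, h⟩)
        have hsup : (⨆ j, |X j ω|) = 0 := by
          have heq : (fun j => |X j ω|) = fun _ => (0:ℝ) :=
            funext fun j => by rw [hz j, abs_zero]
          rw [heq, ciSup_const]
        rw [hsup, hΨ0]
        simp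
    calc ∫⁻ ω, ENNReal.ofReal (Ψ (‖⨆ j, |X j ω|‖ / 1)) ∂μ
        ≤ ∫⁻ ω, S.indicator (fun _ => ENNReal.ofReal (Ψ u)) ω ∂μ := lintegral_mono_ae hbound
      _ = ENNReal.ofReal (Ψ u) * μ S := by
          rw [lintegral_indicator hSm _, setLIntegral_const]
      _ ≤ ENNReal.ofReal (Ψ u) * ∑ j, μ {ω | X j ω ≠ 0} := by
          gcongr
          exact measure_iUnion_fintype_le μ _
      _ = 1 := by
          simp only [hne]
          rw [Finset.sum_const, Finset.card_univ, Fintype.card_fin, nsmul_eq_mul,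
            ← ENNReal.ofReal_natCast, ← ENNReal.ofReal_mul (Nat.cast_nonneg N),
            ← ENNReal.ofReal_mul hΨu0.le,
            show (Ψ u * ((N:ℝ) * (1 / ((N:ℝ) * Ψ u)))) = 1 by field_simp,
            ENNReal.ofReal_one]
  · have hone : ∀ j, ∫⁻ ω, (‖X j ω‖₊ : ENNReal) ∂μ = ENNReal.ofReal (u / ((N:ℝ) * Ψ u)) := by
      intro j
      have hcong : (fun ω => (‖X j ω‖₊ : ENNReal)) =ᵐ[μ]
          (A j ∪ B j).indicator (fun _ => ENNReal.ofReal u) := by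
        filter_upwards [hE] with ω hω
        rcases hω j with h | h | h
        · have hmem : ω ∈ A j ∪ B j := Set.mem_union_left _ (show ω ∈ A j from h)
          rw [Set.indicator_of_mem hmem, ← enorm_eq_nnnorm, ← ofReal_norm, h,
            Real.norm_of_nonneg hu.le]
        · have hmem : ω ∈ A j ∪ B j := Set.mem_union_right _ (show ω ∈ B j from h)
          rw [Set.indicator_of_mem hmem, ← enorm_eq_nnnorm, ← ofReal_norm, h,
            norm_neg, Real.norm_of_nonneg hu.le]
        · have hmem : ω ∉ A j ∪ B j := by
            intro hmem
            rcases hmem with hm | hm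
            · exact hu.ne' ((show X j ω = u from hm).symm.trans h)
            · exact hu.ne' (neg_eq_zero.mp ((show X j ω = -u from hm).symm.trans h))
          rw [Set.indicator_of_notMem hmem, ← enorm_eq_nnnorm, ← ofReal_norm, h, norm_zero,
            ENNReal.ofReal_zero]
      rw [lintegral_congr_ae hcong, lintegral_indicator ((hAm j).union (hBm j)) _,
        setLIntegral_const, measure_union (hABd j) (hBm j), hup j, hdown j,
        ← ENNReal.ofReal_add hp hp, ← ENNReal.ofReal_mul hu.le,
        show (u * (1 / (2 * (N:ℝ) * Ψ u) + 1 / (2 * (N:ℝ) * Ψ u))) = u / ((N:ℝ) * Ψ u) by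
          field_simp; ring]
    calc ∫⁻ ω, (‖∑ j, X j ω‖₊ : ENNReal) ∂μ
        ≤ ∫⁻ ω, ∑ j, (‖X j ω‖₊ : ENNReal) ∂μ := by
          refine lintegral_mono fun ω => ?_
          simpa [ENNReal.coe_finset_sum] using
            ENNReal.coe_le_coe.2 (nnnorm_sum_le Finset.univ (fun j => X j ω))
      _ = ∑ j, ∫⁻ ω, (‖X j ω‖₊ : ENNReal) ∂μ :=
          lintegral_finset_sum _ (fun j _ => ((hmeas j).nnnorm).coe_nnreal_ennreal)
      _ = ENNReal.ofReal (u / Ψ u) := by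
          simp only [hone]
          rw [Finset.sum_const, Finset.card_univ, Fintype.card_fin, nsmul_eq_mul,
            ← ENNReal.ofReal_natCast, ← ENNReal.ofReal_mul (Nat.cast_nonneg N),
            show ((N:ℝ) * (u / ((N:ℝ) * Ψ u))) = u / Ψ u by field_simp]
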